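/- Fix an odd integer b = 2k+1 with k ≥ 1, ρ ∈ [0,1), and γ ∈ (0,1]. Define T(u) = ρ·γ·u + (1-ρ)·f_b(γ·u) for u ∈ [0,1], and α = γ·(ρ + (1-ρ)·f_b'(0)) where f_b'(0) = b·C(b-1,(b-1)/2)/2^{b-1}. If α > 1, then there exists a unique μ* ∈ (0,1] with T(μ*) = μ*; for every μ₀ ∈ (0,1], the iterated sequence μ_{t+1} = T(μ_t) converges to μ* as t → ∞; moreover μ* = 1 if γ = 1, and μ* < 1 if γ < 1. -/

import Mathlib

open Finset Filter

/-- The upper binomial tail `F(p) = ∑_{j=k+1}^{2k+1} C(2k+1,j) p^j (1-p)^{2k+1-j}`. -/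
noncomputable def majF (k : ℕ) (p : ℝ) : ℝ :=
  ∑ j ∈ Finset.Icc (k + 1) (2 * k + 1),
    (Nat.choose (2 * k + 1) j : ℝ) * p ^ j * (1 - p) ^ (2 * k + 1 - j)

/-- The majority map `f_b(u) = 2 F((1+u)/2) - 1` for odd fan-in `b = 2k+1`. -/
noncomputable def majMap (k : ℕ) (u : ℝ) : ℝ :=
  2 * majF k ((1 + u) / 2) - 1

/-- The one-layer recursion map `T(u) = ρ γ u + (1-ρ) f_b(γ u)` for fan-in `b = 2k+1`. -/
noncomputable def Tmap (k : ℕ) (ρ γ u : ℝ) : ℝ :=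
  ρ * γ * u + (1 - ρ) * majMap k (γ * u)

/-- The derivative of the majority map at the origin:
`f_b'(0) = b C(b-1,(b-1)/2)/2^{b-1} = (2k+1) C(2k,k)/2^{2k}`. -/
noncomputable def majPrimeZero (k : ℕ) : ℝ :=
  (2 * k + 1 : ℝ) * (Nat.choose (2 * k) k : ℝ) / 2 ^ (2 * k)

/-- The effective per-layer gain `α = γ (ρ + (1-ρ) f_b'(0))`. -/
noncomputable def alphaGain (k : ℕ) (ρ γ : ℝ) : ℝ :=
  γ * (ρ + (1 - ρ) * majPrimeZero k)

/- ### Auxiliary natural-number identities -/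

lemma nat_choose_left (k j : ℕ) (hj : 1 ≤ j) :
    (2 * k + 1) * Nat.choose (2 * k) (j - 1) = Nat.choose (2 * k + 1) j * j := by
  have h := Nat.add_one_mul_choose_eq (2 * k) (j - 1)
  rwa [Nat.sub_add_cancel hj] at h

lemma nat_choose_right (k j : ℕ) :
    (2 * k + 1) * Nat.choose (2 * k) j = Nat.choose (2 * k + 1) j * (2 * k + 1 - j) := by
  rcases le_or_gt j (2 * k) with h | h
  · have h1 := Nat.add_one_mul_choose_eq (2 * k) (2 * k - j)
    rw [Nat.choose_symm h] at h1
    have e1 : 2 * k - j + 1 = 2 * k + 1 - j := by omega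
    rw [e1] at h1
    have e2 : Nat.choose (2 * k + 1) (2 * k + 1 - j) = Nat.choose (2 * k + 1) j := by
      rw [Nat.choose_symm (by omega)]
    rw [e2] at h1
    exact h1
  · have h0 : Nat.choose (2 * k) j = 0 := Nat.choose_eq_zero_of_lt h
    have h2 : 2 * k + 1 - j = 0 ∨ Nat.choose (2 * k + 1) j = 0 := by
      rcases le_or_gt j (2 * k + 1) with h' | h'
      · left; omega
      · right; exact Nat.choose_eq_zero_of_lt h'
    rcases h2 with h2 | h2 <;> simp [h0, h2]

/- ### The derivative of `majF` -/

lemma hasDerivAt_majF (k : ℕ) (p : ℝ) :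
    HasDerivAt (majF k)
      ((2 * k + 1 : ℝ) * (Nat.choose (2 * k) k : ℝ) * (p ^ k * (1 - p) ^ k)) p := by
  classical
  set U : ℕ → ℝ := fun j =>
    (2 * k + 1 : ℝ) * (Nat.choose (2 * k) j : ℝ) * (p ^ j * (1 - p) ^ (2 * k - j)) with hU
  -- derivative of each term
  have hterm : ∀ j ∈ Finset.Icc (k + 1) (2 * k + 1),
      HasDerivAt (fun p : ℝ => (Nat.choose (2 * k + 1) j : ℝ) * p ^ j * (1 - p) ^ (2 * k + 1 - j))
        (U (j - 1) - U j) p := by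
    intro j hj
    simp only [Finset.mem_Icc] at hj
    have hj1 : 1 ≤ j := le_trans (Nat.le_add_left 1 k) hj.1
    have hp1 : HasDerivAt (fun p : ℝ => p ^ j) ((j : ℝ) * p ^ (j - 1)) p := hasDerivAt_pow j p
    have hp2 : HasDerivAt (fun p : ℝ => (1 - p) ^ (2 * k + 1 - j))
        (((2 * k + 1 - j : ℕ) : ℝ) * (1 - p) ^ (2 * k + 1 - j - 1) * (-1)) p := by
      have hin : HasDerivAt (fun p : ℝ => 1 - p) (-1) p := by
        simpa using (hasDerivAt_id p).const_sub 1
      exact hin.pow _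
    have hmul := ((hp1.mul hp2).const_mul ((Nat.choose (2 * k + 1) j : ℝ)))
    have harr : (fun p : ℝ => (Nat.choose (2 * k + 1) j : ℝ) *
        (p ^ j * (1 - p) ^ (2 * k + 1 - j))) =
        fun p : ℝ => (Nat.choose (2 * k + 1) j : ℝ) * p ^ j * (1 - p) ^ (2 * k + 1 - j) := by
      funext x; ring
    simp only [Pi.mul_apply] at hmul
    rw [harr] at hmul
    refine hmul.congr_deriv ?_
    -- value equality
    have eA : (2 * k + 1 : ℝ) * (Nat.choose (2 * k) (j - 1) : ℝ) =
        (Nat.choose (2 * k + 1) j : ℝ) * (j : ℝ) := by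
      exact_mod_cast congrArg (fun n : ℕ => (n : ℝ)) (nat_choose_left k j hj1)
    have eB : (2 * k + 1 : ℝ) * (Nat.choose (2 * k) j : ℝ) =
        (Nat.choose (2 * k + 1) j : ℝ) * ((2 * k + 1 - j : ℕ) : ℝ) := by
      exact_mod_cast congrArg (fun n : ℕ => (n : ℝ)) (nat_choose_right k j)
    have expA : 2 * k - (j - 1) = 2 * k + 1 - j := by omega
    have expB : 2 * k + 1 - j - 1 = 2 * k - j := by omega
    simp only [hU, expA, expB]
    rw [eA, eB]
    ring
  have hsum := HasDerivAt.fun_sum hterm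
  have : HasDerivAt (majF k) (∑ j ∈ Finset.Icc (k + 1) (2 * k + 1), (U (j - 1) - U j)) p := by
    exact hsum
  convert this using 1
  -- telescoping
  rw [← Finset.Ico_add_one_right_eq_Icc, Finset.sum_Ico_eq_sum_range]
  have hlen : 2 * k + 1 + 1 - (k + 1) = k + 1 := by omega
  rw [hlen]
  have hre : ∀ i, U (k + 1 + i - 1) - U (k + 1 + i) = (fun i => U (k + i)) i - (fun i => U (k + i)) (i + 1) := by
    intro i
    have : k + 1 + i - 1 = k + i := by omega
    have h2 : k + 1 + i = k + (i + 1) := by omega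
    rw [this, h2]
  calc (2 * k + 1 : ℝ) * (Nat.choose (2 * k) k : ℝ) * (p ^ k * (1 - p) ^ k)
      = U k - U (k + (k + 1)) := by
        have : k + (k + 1) = 2 * k + 1 := by omega
        rw [this]
        have hz : Nat.choose (2 * k) (2 * k + 1) = 0 := Nat.choose_eq_zero_of_lt (by omega)
        simp only [hU]
        rw [hz, show 2 * k - k = k by omega]
        push_cast
        ring
    _ = ∑ i ∈ Finset.range (k + 1), ((fun i => U (k + i)) i - (fun i => U (k + i)) (i + 1)) := by
        rw [Finset.sum_range_sub' (fun i => U (k + i)) (k + 1)]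
        simp
    _ = ∑ i ∈ Finset.range (k + 1), (U (k + 1 + i - 1) - U (k + 1 + i)) := by
        exact Finset.sum_congr rfl (fun i _ => (hre i).symm)

/- ### Derivative of `majMap` and `Tmap` -/

lemma hasDerivAt_majMap (k : ℕ) (x : ℝ) :
    HasDerivAt (majMap k)
      ((2 * k + 1 : ℝ) * (Nat.choose (2 * k) k : ℝ) *
        (((1 + x) / 2) ^ k * ((1 - x) / 2) ^ k)) x := by
  have hin : HasDerivAt (fun x : ℝ => (1 + x) / 2) (1 / 2) x := by
    have : HasDerivAt (fun x : ℝ => 1 + x) 1 x := by simpa using (hasDerivAt_id x).const_add 1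
    simpa using this.div_const 2
  have hcomp := (hasDerivAt_majF k ((1 + x) / 2)).comp x hin
  have h2 := (hcomp.const_mul (2 : ℝ)).sub_const 1
  have harr : (fun x : ℝ => 2 * (majF k ∘ fun x : ℝ => (1 + x) / 2) x - 1) = majMap k := by
    funext y; simp [majMap, Function.comp]
  rw [harr] at h2
  refine h2.congr_deriv ?_
  have : (1 : ℝ) - (1 + x) / 2 = (1 - x) / 2 := by ring
  rw [this]
  ring

/-- The derivative of `Tmap` as a function. -/
noncomputable def Tderiv (k : ℕ) (ρ γ x : ℝ) : ℝ :=
  ρ * γ + (1 - ρ) * ((2 * k + 1 : ℝ) * (Nat.choose (2 * k) k : ℝ) *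
    (((1 + γ * x) / 2) ^ k * ((1 - γ * x) / 2) ^ k) * γ)

lemma hasDerivAt_Tmap (k : ℕ) (ρ γ x : ℝ) :
    HasDerivAt (Tmap k ρ γ) (Tderiv k ρ γ x) x := by
  have h1 : HasDerivAt (fun x : ℝ => ρ * γ * x) (ρ * γ) x := by
    simpa using (hasDerivAt_id x).const_mul (ρ * γ)
  have hin : HasDerivAt (fun x : ℝ => γ * x) γ x := by
    simpa using (hasDerivAt_id x).const_mul γ
  have h2 := ((hasDerivAt_majMap k (γ * x)).comp x hin).const_mul (1 - ρ)
  have := h1.add h2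
  have harr : (fun x : ℝ => ρ * γ * x + (1 - ρ) * (majMap k ∘ fun x : ℝ => γ * x) x) = Tmap k ρ γ := by
    funext y; simp [Tmap, Function.comp]
  simp only [Pi.add_def] at this
  rw [harr] at this
  exact this

lemma Tderiv_zero (k : ℕ) (ρ γ : ℝ) : Tderiv k ρ γ 0 = alphaGain k ρ γ := by
  unfold Tderiv alphaGain majPrimeZero
  have h4 : ((1 : ℝ) / 2) ^ k * ((1 : ℝ) / 2) ^ k = ((2 : ℝ) ^ (2 * k))⁻¹ := by
    rw [← pow_add, show k + k = 2 * k by ring, div_pow, one_pow]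
    norm_num
  simp only [mul_zero, add_zero, sub_zero]
  rw [h4]
  have : (2 : ℝ) ^ (2 * k) ≠ 0 := by positivity
  field_simp


/- ### Values of `majF` and `majMap` -/

lemma full_sum (k : ℕ) (p : ℝ) :
    ∑ j ∈ Finset.range (2 * k + 1 + 1),
      (Nat.choose (2 * k + 1) j : ℝ) * p ^ j * (1 - p) ^ (2 * k + 1 - j) = 1 := by
  have h := add_pow p (1 - p) (2 * k + 1)
  have hp : p + (1 - p) = 1 := by ring
  rw [hp, one_pow] at h
  exact Eq.trans (Finset.sum_congr rfl fun j _ => by ring) h.symm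

lemma majF_le_one (k : ℕ) (p : ℝ) (hp0 : 0 ≤ p) (hp1 : p ≤ 1) : majF k p ≤ 1 := by
  rw [← full_sum k p]
  unfold majF
  apply Finset.sum_le_sum_of_subset_of_nonneg
  · intro j hj
    simp only [Finset.mem_Icc] at hj
    simp only [Finset.mem_range]
    omega
  · intro j _ _
    have h1 : (0:ℝ) ≤ 1 - p := by linarith
    positivity

lemma majF_split (k : ℕ) (p : ℝ) :
    majF k p = 1 - ∑ j ∈ Finset.range (k + 1),
      (Nat.choose (2 * k + 1) j : ℝ) * p ^ j * (1 - p) ^ (2 * k + 1 - j) := by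
  have h := full_sum k p
  have hsplit : Finset.range (2 * k + 1 + 1) =
      Finset.range (k + 1) ∪ Finset.Icc (k + 1) (2 * k + 1) := by
    ext j
    simp only [Finset.mem_range, Finset.mem_union, Finset.mem_Icc]
    omega
  have hdisj : Disjoint (Finset.range (k + 1)) (Finset.Icc (k + 1) (2 * k + 1)) := by
    rw [Finset.disjoint_left]
    intro j hj hj'
    simp only [Finset.mem_range] at hj
    simp only [Finset.mem_Icc] at hj'
    omega
  rw [hsplit, Finset.sum_union hdisj] at h
  unfold majF
  linarith

lemma majF_lt_one (k : ℕ) (p : ℝ) (hp0 : 0 ≤ p) (hp1 : p < 1) : majF k p < 1 := by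
  rw [majF_split]
  have hpos : (0:ℝ) < (Nat.choose (2 * k + 1) 0 : ℝ) * p ^ 0 * (1 - p) ^ (2 * k + 1 - 0) := by
    simp only [Nat.choose_zero_right, Nat.cast_one, pow_zero, one_mul, Nat.sub_zero]
    have : (0:ℝ) < 1 - p := by linarith
    positivity
  have hsum : (0:ℝ) < ∑ j ∈ Finset.range (k + 1),
      (Nat.choose (2 * k + 1) j : ℝ) * p ^ j * (1 - p) ^ (2 * k + 1 - j) := by
    apply lt_of_lt_of_le hpos
    apply Finset.single_le_sum (f := fun j =>
      (Nat.choose (2 * k + 1) j : ℝ) * p ^ j * (1 - p) ^ (2 * k + 1 - j))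
    · intro j _
      have h1 : (0:ℝ) ≤ 1 - p := by linarith
      positivity
    · simp
  linarith

lemma choose_tail_sum (k : ℕ) :
    ∑ j ∈ Finset.Icc (k + 1) (2 * k + 1), Nat.choose (2 * k + 1) j = 4 ^ k := by
  have h1 := Nat.sum_range_choose (2 * k + 1)
  have h2 := Nat.sum_range_choose_halfway k
  have hsplit : Finset.range (2 * k + 1 + 1) =
      Finset.range (k + 1) ∪ Finset.Icc (k + 1) (2 * k + 1) := by
    ext j
    simp only [Finset.mem_range, Finset.mem_union, Finset.mem_Icc]
    omega
  have hdisj : Disjoint (Finset.range (k + 1)) (Finset.Icc (k + 1) (2 * k + 1)) := by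
    rw [Finset.disjoint_left]
    intro j hj hj'
    simp only [Finset.mem_range] at hj
    simp only [Finset.mem_Icc] at hj'
    omega
  rw [hsplit, Finset.sum_union hdisj, h2] at h1
  have hpow : 2 ^ (2 * k + 1) = 2 * 4 ^ k := by
    rw [pow_succ, show (4:ℕ) ^ k = 2 ^ (2 * k) by rw [pow_mul]; norm_num]
    ring
  omega

lemma majF_half (k : ℕ) : majF k (1/2 : ℝ) = 1/2 := by
  unfold majF
  have hterm : ∀ j ∈ Finset.Icc (k + 1) (2 * k + 1),
      (Nat.choose (2 * k + 1) j : ℝ) * (1/2:ℝ) ^ j * (1 - 1/2) ^ (2 * k + 1 - j) =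
      (Nat.choose (2 * k + 1) j : ℝ) * (1/2:ℝ) ^ (2 * k + 1) := by
    intro j hj
    simp only [Finset.mem_Icc] at hj
    rw [show (1:ℝ) - 1/2 = 1/2 by norm_num, mul_assoc, ← pow_add,
      show j + (2 * k + 1 - j) = 2 * k + 1 by omega]
  rw [Finset.sum_congr rfl hterm, ← Finset.sum_mul, ← Nat.cast_sum, choose_tail_sum k]
  rw [div_pow, one_pow]
  push_cast
  rw [show (4:ℝ) = 2 ^ 2 by norm_num, ← pow_mul, pow_succ]
  have h2 : (2:ℝ) ^ (2 * k) ≠ 0 := by positivity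
  field_simp

lemma majF_one (k : ℕ) : majF k (1 : ℝ) = 1 := by
  unfold majF
  rw [Finset.sum_eq_single_of_mem (2 * k + 1)
    (by simp only [Finset.mem_Icc]; omega)]
  · simp
  · intro j hj hne
    simp only [Finset.mem_Icc] at hj
    rw [sub_self, zero_pow (by omega)]
    ring

lemma majMap_zero (k : ℕ) : majMap k 0 = 0 := by
  unfold majMap
  rw [show ((1:ℝ) + 0) / 2 = 1/2 by norm_num, majF_half]
  norm_num

lemma majMap_one (k : ℕ) : majMap k 1 = 1 := by
  unfold majMap
  rw [show ((1:ℝ) + 1) / 2 = 1 by norm_num, majF_one]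
  norm_num

lemma majMap_le_one (k : ℕ) (u : ℝ) (h0 : 0 ≤ u) (h1 : u ≤ 1) : majMap k u ≤ 1 := by
  unfold majMap
  have := majF_le_one k ((1 + u) / 2) (by linarith) (by linarith)
  linarith

lemma majMap_lt_one (k : ℕ) (u : ℝ) (h0 : 0 ≤ u) (h1 : u < 1) : majMap k u < 1 := by
  unfold majMap
  have := majF_lt_one k ((1 + u) / 2) (by linarith) (by linarith)
  linarith

/- ### Qualitative properties of the derivative -/

lemma choose_central_pos (k : ℕ) : (0:ℝ) < (Nat.choose (2 * k) k : ℝ) := by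
  exact_mod_cast Nat.choose_pos (by omega)

lemma Tderiv_pos (k : ℕ) (ρ γ x : ℝ) (hρ0 : 0 ≤ ρ) (hρ1 : ρ < 1) (hγ : 0 < γ)
    (h1 : -1 < γ * x) (h2 : γ * x < 1) : 0 < Tderiv k ρ γ x := by
  unfold Tderiv
  have hC := choose_central_pos k
  have a1 : (0:ℝ) < (1 + γ * x) / 2 := by linarith
  have a2 : (0:ℝ) < (1 - γ * x) / 2 := by linarith
  have a3 : (0:ℝ) < 1 - ρ := by linarith
  have hb : (0:ℝ) < (2 * (k:ℝ) + 1) := by positivity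
  have hterm : (0:ℝ) < (1 - ρ) * ((2 * (k:ℝ) + 1) * (Nat.choose (2 * k) k : ℝ) *
      (((1 + γ * x) / 2) ^ k * ((1 - γ * x) / 2) ^ k) * γ) := by positivity
  have hfirst : (0:ℝ) ≤ ρ * γ := mul_nonneg hρ0 hγ.le
  linarith

lemma Tderiv_strictAntiOn (k : ℕ) (hk : 1 ≤ k) (ρ γ : ℝ) (hρ1 : ρ < 1) (hγ0 : 0 < γ)
    (hγ1 : γ ≤ 1) : StrictAntiOn (Tderiv k ρ γ) (Set.Ioo (0:ℝ) 1) := by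
  intro x hx y hy hxy
  simp only [Set.mem_Ioo] at hx hy
  have hC := choose_central_pos k
  have hgx : 0 < γ * x := mul_pos hγ0 hx.1
  have hgy1 : γ * y < 1 := by nlinarith [hy.2]
  have hgxy : γ * x < γ * y := by nlinarith
  have hbase : ((1 + γ * y) / 2) * ((1 - γ * y) / 2) < ((1 + γ * x) / 2) * ((1 - γ * x) / 2) := by
    nlinarith
  have hbase0 : (0:ℝ) ≤ ((1 + γ * y) / 2) * ((1 - γ * y) / 2) := by nlinarith
  have hP : ((1 + γ * y) / 2) ^ k * ((1 - γ * y) / 2) ^ k <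
      ((1 + γ * x) / 2) ^ k * ((1 - γ * x) / 2) ^ k := by
    rw [← mul_pow, ← mul_pow]
    exact pow_lt_pow_left₀ hbase hbase0 (by omega)
  unfold Tderiv
  have hc : (0:ℝ) < (1 - ρ) * ((2 * (k:ℝ) + 1) * (Nat.choose (2 * k) k : ℝ) * γ) := by
    have : (0:ℝ) < 1 - ρ := by linarith
    positivity
  nlinarith [hP, hc]

lemma Tmap_continuous (k : ℕ) (ρ γ : ℝ) : Continuous (Tmap k ρ γ) := by
  have : Differentiable ℝ (Tmap k ρ γ) := fun x => (hasDerivAt_Tmap k ρ γ x).differentiableAt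
  exact this.continuous

lemma Tmap_strictMonoOn (k : ℕ) (hk : 1 ≤ k) (ρ γ : ℝ) (hρ0 : 0 ≤ ρ) (hρ1 : ρ < 1)
    (hγ0 : 0 < γ) (hγ1 : γ ≤ 1) : StrictMonoOn (Tmap k ρ γ) (Set.Icc (0:ℝ) 1) := by
  apply strictMonoOn_of_deriv_pos (convex_Icc 0 1) (Tmap_continuous k ρ γ).continuousOn
  intro x hx
  rw [interior_Icc] at hx
  rw [(hasDerivAt_Tmap k ρ γ x).deriv]
  apply Tderiv_pos k ρ γ x hρ0 hρ1 hγ0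
  · nlinarith [hx.1, hx.2]
  · nlinarith [hx.1, hx.2]

lemma Tmap_strictConcaveOn (k : ℕ) (hk : 1 ≤ k) (ρ γ : ℝ) (hρ1 : ρ < 1)
    (hγ0 : 0 < γ) (hγ1 : γ ≤ 1) : StrictConcaveOn ℝ (Set.Icc (0:ℝ) 1) (Tmap k ρ γ) := by
  apply StrictAntiOn.strictConcaveOn_of_deriv (convex_Icc 0 1)
    (Tmap_continuous k ρ γ).continuousOn
  rw [interior_Icc]
  intro x hx y hy hxy
  rw [(hasDerivAt_Tmap k ρ γ x).deriv, (hasDerivAt_Tmap k ρ γ y).deriv]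
  exact Tderiv_strictAntiOn k hk ρ γ hρ1 hγ0 hγ1 hx hy hxy

lemma Tmap_zero (k : ℕ) (ρ γ : ℝ) : Tmap k ρ γ 0 = 0 := by
  simp [Tmap, majMap_zero]

lemma Tderiv_continuous (k : ℕ) (ρ γ : ℝ) : Continuous (Tderiv k ρ γ) := by
  unfold Tderiv
  fun_prop

/-- Supercritical amplification and saturation: if `α > 1`, there is a unique fixed
point `μ* ∈ (0,1]` of `T`, all iterates from `μ₀ ∈ (0,1]` converge to it, and
`μ* = 1` iff the channel is lossless (`γ = 1`), while `μ* < 1` when `γ < 1`. -/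
theorem supercritical_amplification (k : ℕ) (hk : 1 ≤ k) (ρ γ : ℝ)
    (hρ : ρ ∈ Set.Ico (0 : ℝ) 1) (hγ : γ ∈ Set.Ioc (0 : ℝ) 1)
    (hα : 1 < alphaGain k ρ γ) :
    ∃ μstar : ℝ, μstar ∈ Set.Ioc (0 : ℝ) 1 ∧ Tmap k ρ γ μstar = μstar ∧
      (∀ y ∈ Set.Ioc (0 : ℝ) 1, Tmap k ρ γ y = y → y = μstar) ∧
      (∀ μ₀ ∈ Set.Ioc (0 : ℝ) 1, ∀ seq : ℕ → ℝ,
        seq 0 = μ₀ → (∀ t, seq (t + 1) = Tmap k ρ γ (seq t)) →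
        Filter.Tendsto seq Filter.atTop (nhds μstar)) ∧
      (γ = 1 → μstar = 1) ∧ (γ < 1 → μstar < 1) := by
  obtain ⟨hγ0, hγ1⟩ := hγ
  obtain ⟨hρ0, hρ1⟩ := hρ
  have cont := Tmap_continuous k ρ γ
  have mono := Tmap_strictMonoOn k hk ρ γ hρ0 hρ1 hγ0 hγ1
  have conc := Tmap_strictConcaveOn k hk ρ γ hρ1 hγ0 hγ1
  have T0 := Tmap_zero k ρ γ
  have hmajγ : majMap k γ ≤ 1 := majMap_le_one k γ hγ0.le hγ1
  have T1le : Tmap k ρ γ 1 ≤ 1 := by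
    unfold Tmap
    simp only [mul_one]
    have A : (0:ℝ) ≤ ρ * (1 - γ) := mul_nonneg hρ0 (sub_nonneg.mpr hγ1)
    have B : (0:ℝ) ≤ (1 - ρ) * (1 - majMap k γ) :=
      mul_nonneg (sub_nonneg.mpr hρ1.le) (sub_nonneg.mpr hmajγ)
    nlinarith
  -- key three-point concavity consequence
  have mid : ∀ z w : ℝ, 0 < z → z < w → w ≤ 1 →
      (z / w) * Tmap k ρ γ w < Tmap k ρ γ z := by
    intro z w hz hzw hw
    have hw0 : 0 < w := hz.trans hzw
    have h1 := conc.2 (Set.mem_Icc.mpr ⟨le_refl (0:ℝ), by linarith⟩)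
      (Set.mem_Icc.mpr ⟨hw0.le, hw⟩) (fun h => absurd h.symm (ne_of_gt hw0))
      (show (0:ℝ) < 1 - z / w by rw [sub_pos]; exact (div_lt_one hw0).mpr hzw)
      (div_pos hz hw0) (show (1 - z / w) + z / w = 1 by ring)
    simp only [smul_eq_mul] at h1
    rw [T0] at h1
    have e : (1 - z / w) * 0 + z / w * w = z := by field_simp; ring
    rw [e] at h1
    linarith [h1]
  have hTfix1 : γ = 1 → Tmap k ρ γ 1 = 1 := by
    intro h
    unfold Tmap
    rw [h]
    norm_num [majMap_one]
  have hT1lt : γ < 1 → Tmap k ρ γ 1 < 1 := by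
    intro h
    have hlt := majMap_lt_one k γ hγ0.le h
    unfold Tmap
    simp only [mul_one]
    have A : (0:ℝ) ≤ ρ * (1 - γ) := mul_nonneg hρ0 (sub_nonneg.mpr hγ1)
    have B : (1 - ρ) * majMap k γ < (1 - ρ) * 1 :=
      mul_lt_mul_of_pos_left hlt (by linarith)
    nlinarith
  -- a small point pushed up by the map
  have dcont := Tderiv_continuous k ρ γ
  have hd0 : 1 < Tderiv k ρ γ 0 := by rw [Tderiv_zero]; exact hα
  obtain ⟨ε, hε, hball⟩ : ∃ ε > 0, Metric.ball (0:ℝ) ε ⊆ {x | 1 < Tderiv k ρ γ x} :=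
    Metric.isOpen_iff.mp (isOpen_lt continuous_const dcont) 0 hd0
  set u₀ := min (ε/2) (1/2) with hu₀def
  have hu₀pos : 0 < u₀ := lt_min (by linarith) (by norm_num)
  have hu₀lt1 : u₀ < 1 := lt_of_le_of_lt (min_le_right _ _) (by norm_num)
  have hu₀fix : u₀ < Tmap k ρ γ u₀ := by
    obtain ⟨c, hc, hceq⟩ := exists_hasDerivAt_eq_slope (Tmap k ρ γ) (Tderiv k ρ γ) hu₀pos
      cont.continuousOn (fun x _ => hasDerivAt_Tmap k ρ γ x)
    have hcball : c ∈ Metric.ball (0:ℝ) ε := by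
      rw [Metric.mem_ball, Real.dist_eq, sub_zero, abs_of_pos hc.1]
      calc c < u₀ := hc.2
        _ ≤ ε/2 := min_le_left _ _
        _ < ε := by linarith
    have h1c : 1 < Tderiv k ρ γ c := hball hcball
    rw [T0, sub_zero, sub_zero] at hceq
    have hdiv : 1 < Tmap k ρ γ u₀ / u₀ := hceq ▸ h1c
    exact (one_lt_div hu₀pos).mp hdiv
  -- existence of a fixed point
  obtain ⟨μs, hμmem, hfix⟩ : ∃ μs ∈ Set.Ioc (0:ℝ) 1, Tmap k ρ γ μs = μs := by
    rcases eq_or_lt_of_le hγ1 with h | h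
    · exact ⟨1, ⟨one_pos, le_refl 1⟩, hTfix1 h⟩
    · have hg : ContinuousOn (fun x => Tmap k ρ γ x - x) (Set.Icc u₀ 1) :=
        (cont.sub continuous_id).continuousOn
      have h0mem : (0:ℝ) ∈ Set.Icc (Tmap k ρ γ 1 - 1) (Tmap k ρ γ u₀ - u₀) :=
        ⟨by linarith [hT1lt h], by linarith⟩
      obtain ⟨μs, hmem, heq⟩ := intermediate_value_Icc' hu₀lt1.le hg h0mem
      exact ⟨μs, ⟨lt_of_lt_of_le hu₀pos hmem.1, hmem.2⟩, by
        simp only at heq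
        linarith⟩
  have hμ0 : (0:ℝ) < μs := hμmem.1
  have hμ1 : μs ≤ 1 := hμmem.2
  -- uniqueness
  have uniq : ∀ y ∈ Set.Ioc (0:ℝ) 1, Tmap k ρ γ y = y → y = μs := by
    intro y hy hyfix
    by_contra hne
    rcases lt_or_gt_of_ne hne with hlt | hgt
    · have h2 := mid y μs hy.1 hlt hμ1
      rw [hfix, div_mul_cancel₀ _ (ne_of_gt hμ0), hyfix] at h2
      exact lt_irrefl _ h2
    · have h2 := mid μs y hμ0 hgt hy.2
      rw [hyfix, div_mul_cancel₀ _ (ne_of_gt hy.1), hfix] at h2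
      exact lt_irrefl _ h2
  -- comparisons below/above the fixed point
  have hbelow : ∀ z, 0 < z → z < μs → z < Tmap k ρ γ z := by
    intro z hz hzμ
    have h2 := mid z μs hz hzμ hμ1
    rwa [hfix, div_mul_cancel₀ _ (ne_of_gt hμ0)] at h2
  have habove : ∀ w, μs < w → w ≤ 1 → Tmap k ρ γ w < w := by
    intro w hμw hw
    have hw0 : 0 < w := hμ0.trans hμw
    have h2 := mid μs w hμ0 hμw hw
    rw [hfix] at h2
    have hkey := mul_lt_mul_of_pos_left h2 (div_pos hw0 hμ0)
    have hwne : w ≠ 0 := ne_of_gt hw0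
    have hμne : μs ≠ 0 := ne_of_gt hμ0
    have e1 : w / μs * (μs / w * Tmap k ρ γ w) = Tmap k ρ γ w := by
      field_simp
    have e2 : w / μs * μs = w := div_mul_cancel₀ w hμne
    rwa [e1, e2] at hkey
  -- the map sends (0,1] into itself
  have hmaps : ∀ u ∈ Set.Ioc (0:ℝ) 1, Tmap k ρ γ u ∈ Set.Ioc (0:ℝ) 1 := by
    intro u hu
    constructor
    · have h3 := mono (Set.mem_Icc.mpr ⟨le_refl 0, zero_le_one⟩)
        (Set.mem_Icc.mpr ⟨hu.1.le, hu.2⟩) hu.1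
      rwa [T0] at h3
    · have h3 : Tmap k ρ γ u ≤ Tmap k ρ γ 1 := mono.monotoneOn
        (Set.mem_Icc.mpr ⟨hu.1.le, hu.2⟩) (Set.mem_Icc.mpr ⟨zero_le_one, le_refl 1⟩) hu.2
      linarith
  -- convergence of iterates
  have conv : ∀ μ₀ ∈ Set.Ioc (0:ℝ) 1, ∀ seq : ℕ → ℝ, seq 0 = μ₀ →
      (∀ t, seq (t + 1) = Tmap k ρ γ (seq t)) →
      Filter.Tendsto seq Filter.atTop (nhds μs) := by
    intro μ₀ hμ₀ seq h0 hrec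
    have hmem : ∀ t, seq t ∈ Set.Ioc (0:ℝ) 1 := by
      intro t
      induction t with
      | zero => rw [h0]; exact hμ₀
      | succ n ih => rw [hrec n]; exact hmaps _ ih
    rcases le_or_gt μ₀ μs with hle | hgtμ
    · -- monotone increasing case
      have hb : ∀ t, seq t ≤ μs := by
        intro t
        induction t with
        | zero => rw [h0]; exact hle
        | succ n ih =>
          rw [hrec n]
          calc Tmap k ρ γ (seq n) ≤ Tmap k ρ γ μs := mono.monotoneOn
                (Set.mem_Icc.mpr ⟨(hmem n).1.le, (hmem n).2⟩)
                (Set.mem_Icc.mpr ⟨hμ0.le, hμ1⟩) ih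
            _ = μs := hfix
      have hm : Monotone seq := by
        apply monotone_nat_of_le_succ
        intro t
        rw [hrec t]
        rcases lt_or_eq_of_le (hb t) with h | h
        · exact (hbelow (seq t) (hmem t).1 h).le
        · rw [h, hfix]
      have hbdd : BddAbove (Set.range seq) := ⟨μs, by rintro _ ⟨t, rfl⟩; exact hb t⟩
      have htend := tendsto_atTop_ciSup hm hbdd
      have hL1 : μ₀ ≤ ⨆ t, seq t := h0 ▸ le_ciSup hbdd 0
      have hL2 : (⨆ t, seq t) ≤ μs := ciSup_le hb
      have hTL : Tmap k ρ γ (⨆ t, seq t) = ⨆ t, seq t := by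
        have h1 : Filter.Tendsto (fun t => seq (t + 1)) Filter.atTop (nhds (⨆ t, seq t)) :=
          htend.comp (tendsto_add_atTop_nat 1)
        have h2 : Filter.Tendsto (fun t => Tmap k ρ γ (seq t)) Filter.atTop
            (nhds (Tmap k ρ γ (⨆ t, seq t))) := (cont.tendsto _).comp htend
        have h3 : (fun t => seq (t + 1)) = fun t => Tmap k ρ γ (seq t) := funext hrec
        rw [h3] at h1
        exact tendsto_nhds_unique h2 h1
      have hLμ : (⨆ t, seq t) = μs :=
        uniq _ ⟨lt_of_lt_of_le hμ₀.1 hL1, le_trans hL2 hμ1⟩ hTL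
      rwa [hLμ] at htend
    · -- monotone decreasing case
      have hb : ∀ t, μs ≤ seq t := by
        intro t
        induction t with
        | zero => rw [h0]; exact hgtμ.le
        | succ n ih =>
          rw [hrec n]
          calc μs = Tmap k ρ γ μs := hfix.symm
            _ ≤ Tmap k ρ γ (seq n) := mono.monotoneOn
                (Set.mem_Icc.mpr ⟨hμ0.le, hμ1⟩)
                (Set.mem_Icc.mpr ⟨(hmem n).1.le, (hmem n).2⟩) ih
      have hm : Antitone seq := by
        apply antitone_nat_of_succ_le
        intro t
        rw [hrec t]
        rcases lt_or_eq_of_le (hb t) with h | h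
        · exact (habove (seq t) h (hmem t).2).le
        · rw [← h, hfix]
      have hbdd : BddBelow (Set.range seq) := ⟨μs, by rintro _ ⟨t, rfl⟩; exact hb t⟩
      have htend := tendsto_atTop_ciInf hm hbdd
      have hL1 : μs ≤ ⨅ t, seq t := le_ciInf hb
      have hL2 : (⨅ t, seq t) ≤ μ₀ := h0 ▸ ciInf_le hbdd 0
      have hTL : Tmap k ρ γ (⨅ t, seq t) = ⨅ t, seq t := by
        have h1 : Filter.Tendsto (fun t => seq (t + 1)) Filter.atTop (nhds (⨅ t, seq t)) :=
          htend.comp (tendsto_add_atTop_nat 1)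
        have h2 : Filter.Tendsto (fun t => Tmap k ρ γ (seq t)) Filter.atTop
            (nhds (Tmap k ρ γ (⨅ t, seq t))) := (cont.tendsto _).comp htend
        have h3 : (fun t => seq (t + 1)) = fun t => Tmap k ρ γ (seq t) := funext hrec
        rw [h3] at h1
        exact tendsto_nhds_unique h2 h1
      have hLμ : (⨅ t, seq t) = μs :=
        uniq _ ⟨lt_of_lt_of_le hμ0 hL1, le_trans hL2 hμ₀.2⟩ hTL
      rwa [hLμ] at htend
  refine ⟨μs, hμmem, hfix, uniq, conv, ?_, ?_⟩
  · intro h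
    exact (uniq 1 ⟨one_pos, le_refl 1⟩ (hTfix1 h)).symm
  · intro h
    rcases lt_or_eq_of_le hμ1 with h' | h'
    · exact h'
    · exfalso
      rw [h'] at hfix
      exact absurd hfix (ne_of_lt (hT1lt h))
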